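/- Let n ≥ 1 and let u_1,…,u_r ∈ ℤ^n (r ≥ 1) be such that the polytope Newt(f) = convexHull ℝ {u_1,…,u_r} has nonempty interior in ℝ^n, and define f : ℝ^n → ℝ by f(x) = max_{1 ≤ i ≤ r} ⟨u_i,x⟩. Then the limit as m → ∞ (m over positive naturals) of (1/m^n)·#{w ∈ ℤ^n : ⟨w,x⟩ ≤ m·f(x) for all x ∈ ℝ^n} exists and equals the Lebesgue measure of Newt(f). (This is the identity Vol(Newt(f)) = Vol(𝒪(−D)) expressed via lattice-point counts of global sections, since the lattice points of the polytope of −mD are exactly the w ∈ ℤ^n with ⟨w,·⟩ ≤ m·f.) -/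

import Mathlib

open MeasureTheory

open MeasureTheory Metric Bornology Set Filter Topology Pointwise ENNReal NNReal

lemma aux_frontier {E : Type*} [NormedAddCommGroup E] [NormedSpace ℝ E]
    {S : Set E} (hS : IsClosed S) {x y : E} (hx : x ∈ S) (hy : y ∉ S) :
    ∃ z ∈ frontier S, dist x z ≤ dist x y := by
  set γ : ℝ → E := fun t => x + t • (y - x) with hγ
  have hγc : Continuous γ := by fun_prop
  have hγ0 : γ 0 = x := by simp [hγ]
  have hγ1 : γ 1 = y := by simp [hγ]
  set T : Set ℝ := Set.Icc 0 1 ∩ γ ⁻¹' S with hT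
  have h0T : (0:ℝ) ∈ T := ⟨⟨le_refl 0, zero_le_one⟩, by simp [Set.mem_preimage, hγ0, hx]⟩
  have hTne : T.Nonempty := ⟨0, h0T⟩
  have hTc : IsClosed T := isClosed_Icc.inter (hS.preimage hγc)
  have hTb : BddAbove T := ⟨1, fun t ht => ht.1.2⟩
  have ht₀T : sSup T ∈ T := hTc.csSup_mem hTne hTb
  set t₀ := sSup T with ht₀def
  have ht₀1 : t₀ < 1 :=
    lt_of_le_of_ne ht₀T.1.2 (fun h => hy (by rw [← hγ1, ← h]; exact ht₀T.2))
  have ht₀0 : 0 ≤ t₀ := ht₀T.1.1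
  refine ⟨γ t₀, ?_, ?_⟩
  · rw [frontier_eq_closure_inter_closure]
    refine ⟨subset_closure ht₀T.2, ?_⟩
    have hne : (𝓝[Set.Ioc t₀ 1] t₀).NeBot := by
      rw [← mem_closure_iff_nhdsWithin_neBot, closure_Ioc ht₀1.ne]
      exact ⟨le_refl _, ht₀1.le⟩
    refine mem_closure_of_tendsto (b := 𝓝[Set.Ioc t₀ 1] t₀)
      ((hγc.tendsto t₀).mono_left nhdsWithin_le_nhds) ?_
    filter_upwards [self_mem_nhdsWithin] with t ht
    intro hts
    exact absurd (le_csSup hTb ⟨⟨ht₀0.trans ht.1.le, ht.2⟩, hts⟩) (not_le.mpr ht.1)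
  · have h1 : x - (x + t₀ • (y - x)) = -(t₀ • (y - x)) := by abel
    rw [dist_eq_norm, dist_eq_norm, norm_sub_rev x y, hγ]
    simp only [h1, norm_neg, norm_smul, Real.norm_eq_abs]
    exact mul_le_of_le_one_left (norm_nonneg _) (abs_le.mpr ⟨by linarith, ht₀T.1.2⟩)

lemma cube_vol {n : ℕ} (w : Fin n → ℤ) :
    volume (Set.univ.pi fun j => Set.Ico (w j : ℝ) ((w j : ℝ) + 1)) = 1 := by
  rw [volume_pi_pi]
  simp [Real.volume_Ico]

lemma cube_mem_iff {n : ℕ} (w : Fin n → ℤ) (x : Fin n → ℝ) :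
    x ∈ (Set.univ.pi fun j => Set.Ico (w j : ℝ) ((w j : ℝ) + 1)) ↔ ∀ j, ⌊x j⌋ = w j := by
  simp only [Set.mem_pi, Set.mem_univ, forall_true_left, Set.mem_Ico]
  refine forall_congr' fun j => ?_
  rw [Int.floor_eq_iff]


lemma count_eq {n : ℕ} {S : Set (Fin n → ℤ)} (hS : S.Finite) :
    volume (⋃ w ∈ S, Set.univ.pi fun j => Set.Ico (w j : ℝ) ((w j : ℝ) + 1))
      = S.ncard := by
  classical
  have hd : (↑hS.toFinset : Set (Fin n → ℤ)).PairwiseDisjoint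
      (fun w => Set.univ.pi fun j => Set.Ico (w j : ℝ) ((w j : ℝ) + 1)) := by
    intro a _ b _ hab
    rw [Function.onFun, Set.disjoint_left]
    intro x hxa hxb
    exact hab (funext fun j => ((cube_mem_iff a x).mp hxa j).symm.trans
      ((cube_mem_iff b x).mp hxb j))
  have hm : ∀ w ∈ hS.toFinset, MeasurableSet
      (Set.univ.pi fun j => Set.Ico (w j : ℝ) ((w j : ℝ) + 1)) :=
    fun w _ => MeasurableSet.univ_pi fun j => measurableSet_Ico
  rw [← hS.coe_toFinset, Finset.set_biUnion_coe, measure_biUnion_finset hd hm]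
  simp only [cube_vol, Finset.sum_const, smul_eq_mul, mul_one]
  rw [Set.ncard_coe_finset]
  simp

lemma lattice_finite {n : ℕ} {B : Set (Fin n → ℝ)} (hB : IsBounded B) :
    {w : Fin n → ℤ | (fun j => (w j : ℝ)) ∈ B}.Finite := by
  obtain hR := hB.subset_closedBall 0
  obtain ⟨R, hR⟩ := hR
  apply Set.Finite.subset (Set.finite_Icc (fun _ : Fin n => -⌈R⌉) fun _ => ⌈R⌉)
  intro w hw
  have h1 := hR hw
  rw [Metric.mem_closedBall, dist_zero_right] at h1
  have h2 : ∀ j, |(w j : ℝ)| ≤ R := fun j => by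
    calc |(w j : ℝ)| = ‖(fun j => (w j : ℝ)) j‖ := by simp
    _ ≤ ‖(fun j => (w j : ℝ))‖ := by simpa using norm_le_pi_norm (fun j => (w j : ℝ)) j
    _ ≤ R := h1
  constructor <;> intro j
  · have := (abs_le.mp (h2 j)).1
    have : (-⌈R⌉ : ℝ) ≤ (w j : ℝ) := le_trans (by push_cast; linarith [Int.le_ceil R]) this
    exact_mod_cast this
  · have := (abs_le.mp (h2 j)).2
    have : ((w j : ℝ)) ≤ (⌈R⌉ : ℝ) := le_trans this (Int.le_ceil R)
    exact_mod_cast this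

lemma cthickening_smul_eq {E : Type*} [NormedAddCommGroup E] [NormedSpace ℝ E]
    {c : ℝ} (hc : 0 < c) (ε : ℝ) (A : Set E) :
    Metric.cthickening (c * ε) (c • A) = c • Metric.cthickening ε A := by
  ext x
  rw [Set.mem_smul_set_iff_inv_smul_mem₀ hc.ne', Metric.mem_cthickening_iff,
    Metric.mem_cthickening_iff]
  have h1 : infEDist x (c • A) = (‖c‖₊ : ℝ≥0∞) * infEDist (c⁻¹ • x) A := by
    conv_lhs => rw [show x = c • (c⁻¹ • x) by rw [smul_inv_smul₀ hc.ne']]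
    rw [infEDist_smul₀ hc.ne', ENNReal.smul_def, smul_eq_mul]
  rw [h1, ENNReal.ofReal_mul hc.le, ← enorm_eq_nnnorm, Real.enorm_eq_ofReal hc.le]
  exact ENNReal.mul_le_mul_iff_right ((ENNReal.ofReal_pos.mpr hc).ne') ENNReal.ofReal_ne_top

/-- For a tropical polynomial `f(x) = max_i ⟨u_i,x⟩` whose Newton polytope
`Newt(f) = conv(u_1,…,u_r)` is full-dimensional, the number of lattice points
`w ∈ ℤ^n` with `⟨w,·⟩ ≤ m·f` (the global sections of `𝒪(-mD)`), divided by
`m^n`, tends to the Euclidean volume of `Newt(f)`; i.e.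
`Vol(Newt(f)) = Vol(𝒪(-D))`. -/
theorem stmt5 (n r : ℕ) (hn : 1 ≤ n) (hr : 1 ≤ r)
    (u : Fin r → Fin n → ℤ) (f : (Fin n → ℝ) → ℝ)
    (hf : ∀ x : Fin n → ℝ,
      IsGreatest (Set.range fun i : Fin r => ∑ j, (u i j : ℝ) * x j) (f x))
    (hfull : (interior (convexHull ℝ
      (Set.range fun (i : Fin r) (j : Fin n) => (u i j : ℝ)))).Nonempty) :
    Filter.Tendsto
      (fun m : ℕ =>
        (({w : Fin n → ℤ | ∀ x : Fin n → ℝ,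
          (∑ j, (w j : ℝ) * x j) ≤ (m : ℝ) * f x}.ncard : ℝ)) / (m : ℝ) ^ n)
      Filter.atTop
      (nhds (volume (convexHull ℝ
        (Set.range fun (i : Fin r) (j : Fin n) => (u i j : ℝ)))).toReal) := by
  classical
  set P := convexHull ℝ (Set.range fun (i : Fin r) (j : Fin n) => (u i j : ℝ)) with hPdef
  have hPc : IsCompact P := (Set.finite_range _).isCompact_convexHull ℝ
  have hPconv : Convex ℝ P := convex_convexHull ℝ _
  have hPb : IsBounded P := hPc.isBounded
  have hfinrank : Module.finrank ℝ (Fin n → ℝ) = n := by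
    simp [Module.finrank_fintype_fun_eq_card]
  -- halfspace characterization
  have key : ∀ (c : ℝ), 0 < c → ∀ v : Fin n → ℝ,
      ((∀ x, (∑ j, v j * x j) ≤ c * f x) ↔ v ∈ c • P) := by
    intro c hc v
    constructor
    · intro h
      by_contra hv
      have hconv : Convex ℝ (c • P) := hPconv.smul c
      have hcl : IsClosed (c • P) := by
        rw [← Set.image_smul]
        exact ((hPc.image (continuous_const_smul c)).isClosed)
      obtain ⟨φ, s, hs1, hs2⟩ := geometric_hahn_banach_closed_point hconv hcl hv
      set x : Fin n → ℝ := fun j => φ (Pi.single j 1) with hx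
      have heval : ∀ q : Fin n → ℝ, φ q = ∑ j, q j * x j := by
        intro q
        have hq : q = ∑ j, q j • (Pi.single j (1:ℝ) : Fin n → ℝ) := by
          funext k
          simp [Finset.sum_apply, Pi.single_apply, Finset.sum_ite_eq']
        conv_lhs => rw [hq]
        rw [map_sum]
        simp [hx]
      obtain ⟨i, hi⟩ := (hf x).1
      have hui : c • (fun j => (u i j : ℝ)) ∈ c • P :=
        Set.smul_mem_smul_set (subset_convexHull ℝ _ ⟨i, rfl⟩)
      have h3 : φ (c • fun j => (u i j : ℝ)) = c * f x := by
        rw [_root_.map_smul, smul_eq_mul, heval, ← hi]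
      have h4 := hs1 _ hui
      rw [heval v] at hs2
      have h5 := h x
      rw [← h3] at h5
      linarith
    · rintro ⟨p, hp, rfl⟩ x
      have hsub : P ⊆ {q : Fin n → ℝ | (∑ j, q j * x j) ≤ f x} := by
        apply convexHull_min
        · rintro _ ⟨i, rfl⟩
          exact (hf x).2 ⟨i, rfl⟩
        · exact convex_halfSpace_le
            ⟨fun a b => by simp [add_mul, Finset.sum_add_distrib],
             fun a q => by simp [Finset.mul_sum, mul_assoc]⟩ (f x)
      have hple := hsub hp
      calc ∑ j, (c • p) j * x j = c * ∑ j, p j * x j := by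
            simp [Finset.mul_sum, ← mul_assoc]
      _ ≤ c * f x := mul_le_mul_of_nonneg_left hple hc.le
  -- limits of thickenings
  have hPvol : volume P ≠ ⊤ := hPb.measure_lt_top.ne
  have hcthPfin : ∀ δ : ℝ, volume (Metric.cthickening δ P) ≠ ⊤ :=
    fun δ => (hPb.cthickening).measure_lt_top.ne
  have hcthFfin : ∀ δ : ℝ, volume (Metric.cthickening δ (frontier P)) ≠ ⊤ := by
    intro δ
    have hb : IsBounded (frontier P) :=
      hPb.subset (frontier_subset_closure.trans_eq hPc.isClosed.closure_eq)
    exact hb.cthickening.measure_lt_top.ne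
  -- limits of the two bounding sequences
  have hth1 : Filter.Tendsto
      (fun m : ℕ => (volume (Metric.cthickening (1/(m:ℝ)) P)).toReal)
      Filter.atTop (𝓝 (volume P).toReal) := by
    have h1 : Filter.Tendsto (fun δ : ℝ => volume (Metric.cthickening δ P)) (𝓝 0)
        (𝓝 (volume P)) :=
      tendsto_measure_cthickening_of_isClosed ⟨1, one_pos, hcthPfin 1⟩ hPc.isClosed
    exact (ENNReal.tendsto_toReal hPvol).comp (h1.comp tendsto_one_div_atTop_nhds_zero_nat)
  have hfront0 : volume (frontier P) = 0 := hPconv.addHaar_frontier volume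
  have hth2 : Filter.Tendsto
      (fun m : ℕ => (volume (Metric.cthickening (1/(m:ℝ)) (frontier P))).toReal)
      Filter.atTop (𝓝 0) := by
    have h1 : Filter.Tendsto (fun δ : ℝ => volume (Metric.cthickening δ (frontier P))) (𝓝 0)
        (𝓝 (volume (frontier P))) :=
      tendsto_measure_cthickening_of_isClosed ⟨1, one_pos, hcthFfin 1⟩ isClosed_frontier
    rw [hfront0] at h1
    have h2 := (ENNReal.tendsto_toReal (by simp : (0:ℝ≥0∞) ≠ ⊤)).comp
      (h1.comp tendsto_one_div_atTop_nhds_zero_nat)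
    simpa [Function.comp_def] using h2
  have hvsmul : ∀ (c : ℝ), 0 < c → ∀ T : Set (Fin n → ℝ),
      volume (c • T) = ENNReal.ofReal (c ^ n) * volume T := by
    intro c hc T
    rw [MeasureTheory.Measure.addHaar_smul volume c T, hfinrank,
      abs_of_nonneg (by positivity)]
  -- the main sandwich estimate
  have main : ∀ m : ℕ, 1 ≤ m →
      (volume P).toReal - (volume (Metric.cthickening (1/(m:ℝ)) (frontier P))).toReal
        ≤ (({w : Fin n → ℤ | ∀ x : Fin n → ℝ,
            (∑ j, (w j : ℝ) * x j) ≤ (m : ℝ) * f x}.ncard : ℝ)) / (m : ℝ) ^ n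
      ∧ (({w : Fin n → ℤ | ∀ x : Fin n → ℝ,
            (∑ j, (w j : ℝ) * x j) ≤ (m : ℝ) * f x}.ncard : ℝ)) / (m : ℝ) ^ n
        ≤ (volume (Metric.cthickening (1/(m:ℝ)) P)).toReal := by
    intro m hm
    have hc : (0:ℝ) < (m:ℝ) := by exact_mod_cast Nat.lt_of_lt_of_le Nat.zero_lt_one hm
    set c : ℝ := (m:ℝ) with hcdef
    have hSeq : {w : Fin n → ℤ | ∀ x : Fin n → ℝ,
        (∑ j, (w j : ℝ) * x j) ≤ c * f x}
        = {w : Fin n → ℤ | (fun j => ((w j : ℝ))) ∈ c • P} := by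
      ext w
      exact key c hc _
    rw [hSeq]
    set S := {w : Fin n → ℤ | (fun j => ((w j : ℝ))) ∈ c • P} with hSdef
    have hcompact : IsCompact (c • P) := by
      rw [← Set.image_smul]; exact hPc.image (continuous_const_smul c)
    have hclosed : IsClosed (c • P) := hcompact.isClosed
    have hfin : S.Finite := lattice_finite hcompact.isBounded
    have hcard := count_eq hfin
    -- upper bound
    have hUsub : (⋃ w ∈ S, Set.univ.pi fun j => Set.Ico ((w j : ℝ)) ((w j : ℝ) + 1))
        ⊆ Metric.cthickening 1 (c • P) := by
      refine Set.iUnion₂_subset fun w hw => ?_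
      have hwght : (fun j => ((w j : ℝ))) ∈ c • P := hw
      intro x hx
      apply Metric.closedBall_subset_cthickening hwght 1
      rw [Metric.mem_closedBall]
      rw [dist_pi_le_iff zero_le_one]
      intro j
      have hj := (cube_mem_iff w x).mp hx j
      have h1 : ((w j : ℝ)) ≤ x j := hj ▸ Int.floor_le (x j)
      have h2 : x j < (w j : ℝ) + 1 := by
        rw [← hj]; push_cast; exact Int.lt_floor_add_one (x j)
      rw [Real.dist_eq, abs_le]
      constructor <;> linarith
    have hsmul1 : Metric.cthickening 1 (c • P) = c • Metric.cthickening (1/c) P := by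
      rw [← cthickening_smul_eq hc (1/c) P, mul_one_div_cancel hc.ne']
    have hup : (S.ncard : ℝ≥0∞) ≤ ENNReal.ofReal (c ^ n) * volume (Metric.cthickening (1/c) P) := by
      rw [← hvsmul c hc, ← hsmul1, ← hcard]
      exact measure_mono hUsub
    have hupR : (S.ncard : ℝ) ≤ c ^ n * (volume (Metric.cthickening (1/c) P)).toReal := by
      have hfin2 : ENNReal.ofReal (c ^ n) * volume (Metric.cthickening (1/c) P) ≠ ⊤ :=
        ENNReal.mul_ne_top ENNReal.ofReal_ne_top (hcthPfin _)
      have h3 := (ENNReal.toReal_le_toReal (by simp) hfin2).mpr hup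
      rwa [ENNReal.toReal_natCast, ENNReal.toReal_mul,
        ENNReal.toReal_ofReal (by positivity)] at h3
    -- lower bound
    have hAsub : (c • P) \ Metric.cthickening 1 (frontier (c • P))
        ⊆ ⋃ w ∈ S, Set.univ.pi fun j => Set.Ico ((w j : ℝ)) ((w j : ℝ) + 1) := by
      rintro x ⟨hx1, hx2⟩
      refine Set.mem_iUnion₂.mpr ⟨fun j => ⌊x j⌋, ?_, ?_⟩
      · rw [hSdef]
        by_contra hbad
        obtain ⟨z, hz, hdz⟩ := aux_frontier hclosed hx1 hbad
        apply hx2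
        refine Metric.mem_cthickening_of_dist_le x z 1 _ hz (hdz.trans ?_)
        rw [dist_pi_le_iff zero_le_one]
        intro j
        have h1 : ((⌊x j⌋ : ℝ)) ≤ x j := Int.floor_le (x j)
        have h2 : x j < (⌊x j⌋ : ℝ) + 1 := Int.lt_floor_add_one (x j)
        rw [Real.dist_eq, abs_le]
        constructor <;> linarith
      · rw [cube_mem_iff]
        intro j; rfl
    have hcover : c • P ⊆
        (⋃ w ∈ S, Set.univ.pi fun j => Set.Ico ((w j : ℝ)) ((w j : ℝ) + 1))
          ∪ Metric.cthickening 1 (frontier (c • P)) := by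
      intro x hx
      by_cases hx2 : x ∈ Metric.cthickening 1 (frontier (c • P))
      · exact Or.inr hx2
      · exact Or.inl (hAsub ⟨hx, hx2⟩)
    have hfrsmul : frontier (c • P) = c • frontier P := by
      simp only [frontier]
      rw [closure_smul₀ c P, interior_smul₀ hc.ne' P, Set.smul_set_sdiff₀ hc.ne']
    have hsmul2 : Metric.cthickening 1 (frontier (c • P))
        = c • Metric.cthickening (1/c) (frontier P) := by
      rw [hfrsmul, ← cthickening_smul_eq hc (1/c) (frontier P), mul_one_div_cancel hc.ne']
    have hlow : ENNReal.ofReal (c ^ n) * volume P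
        ≤ (S.ncard : ℝ≥0∞)
          + ENNReal.ofReal (c ^ n) * volume (Metric.cthickening (1/c) (frontier P)) := by
      rw [← hvsmul c hc, ← hvsmul c hc, ← hsmul2, ← hcard]
      exact le_trans (measure_mono hcover) (measure_union_le _ _)
    have hlowR : c ^ n * (volume P).toReal
        ≤ (S.ncard : ℝ)
          + c ^ n * (volume (Metric.cthickening (1/c) (frontier P))).toReal := by
      have hfin3 : (S.ncard : ℝ≥0∞)
          + ENNReal.ofReal (c ^ n) * volume (Metric.cthickening (1/c) (frontier P)) ≠ ⊤ :=
        ENNReal.add_ne_top.mpr ⟨by simp,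
          ENNReal.mul_ne_top ENNReal.ofReal_ne_top (hcthFfin _)⟩
      have h4 := (ENNReal.toReal_le_toReal
        (ENNReal.mul_ne_top ENNReal.ofReal_ne_top hPvol) hfin3).mpr hlow
      rwa [ENNReal.toReal_add (by simp)
          (ENNReal.mul_ne_top ENNReal.ofReal_ne_top (hcthFfin _)),
        ENNReal.toReal_natCast, ENNReal.toReal_mul, ENNReal.toReal_mul,
        ENNReal.toReal_ofReal (by positivity)] at h4
    have hpow : (0:ℝ) < c ^ n := by positivity
    constructor
    · rw [le_div_iff₀ hpow]
      nlinarith [hlowR]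
    · rw [div_le_iff₀ hpow]
      nlinarith [hupR]
  refine tendsto_of_tendsto_of_tendsto_of_le_of_le'
    (g := fun m : ℕ => (volume P).toReal
      - (volume (Metric.cthickening (1/(m:ℝ)) (frontier P))).toReal)
    (h := fun m : ℕ => (volume (Metric.cthickening (1/(m:ℝ)) P)).toReal)
    (by simpa using tendsto_const_nhds.sub hth2) hth1 ?_ ?_
  · filter_upwards [Filter.eventually_ge_atTop 1] with m hm
    exact (main m hm).1
  · filter_upwards [Filter.eventually_ge_atTop 1] with m hm
    exact (main m hm).2
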